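/- Let E be a category with finite colimits and Q a class of maps containing the isomorphisms such that the full subcategory of the arrow category spanned by Q is closed under finite colimits. Then Q has the right cancellation property: if u and v∘u belong to Q then v belongs to Q. -/

import Mathlib

/-!
STATEMENT 2: Let `E` be a category with finite colimits and `Q` a class of maps containing
the isomorphisms such that the full subcategory of the arrow category spanned by `Q` is
closed under finite colimits.  Then `Q` has the right cancellation property:
if `u` and `u ≫ v` belong to `Q`, then so does `v`.
-/

open CategoryTheory CategoryTheory.Limits

universe v u

namespace Paper

variable {E : Type u} [Category.{v} E]

/-- The full subcategory of the arrow category spanned by `Q` is closed under finite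
colimits. -/
def ClosedUnderFiniteColimitsArrow (Q : MorphismProperty E) : Prop :=
  ∀ (J : Type) [SmallCategory J] [FinCategory J] (D : J ⥤ Arrow E) (c : Cocone D),
    IsColimit c → (∀ j, Q (D.obj j).hom) → Q c.pt.hom

theorem right_cancellation_of_closedUnderFiniteColimits [HasFiniteColimits E]
    (Q : MorphismProperty E)
    (hiso : ∀ ⦃X Y : E⦄ (f : X ⟶ Y), IsIso f → Q f)
    (hQ : ClosedUnderFiniteColimitsArrow Q) :
    ∀ ⦃A B C : E⦄ (u : A ⟶ B) (v : B ⟶ C), Q u → Q (u ≫ v) → Q v := by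
  intro A B C u v hu huv
  -- morphisms in the arrow category
  let f : Arrow.mk u ⟶ Arrow.mk (u ≫ v) :=
    Arrow.homMk (u := 𝟙 A) (v := v) (by simp)
  let g : Arrow.mk u ⟶ Arrow.mk (𝟙 B) :=
    Arrow.homMk (u := u) (v := 𝟙 B) (by simp)
  let inl : Arrow.mk (u ≫ v) ⟶ Arrow.mk v :=
    Arrow.homMk (u := u) (v := 𝟙 C) (by simp)
  let inr : Arrow.mk (𝟙 B) ⟶ Arrow.mk v :=
    Arrow.homMk (u := 𝟙 B) (v := v) (by simp)
  have hcomm : f ≫ inl = g ≫ inr := by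
    apply Arrow.hom_ext <;> simp [f, g, inl, inr]
  let c : PushoutCocone f g := PushoutCocone.mk inl inr hcomm
  have hc : IsColimit c := by
    refine PushoutCocone.IsColimit.mk hcomm
      (fun s => ?_) (fun s => ?_) (fun s => ?_) (fun s m hml hmr => ?_)
    · refine Arrow.homMk (u := s.inr.left) (v := s.inl.right) ?_
      have h2 := congrArg Arrow.Hom.right s.condition
      simp [f, g] at h2
      show s.inr.left ≫ s.pt.hom = v ≫ s.inl.right
      rw [h2]
      simp [Arrow.w s.inr]
    · apply Arrow.hom_ext
      · have h := congrArg Arrow.Hom.left s.condition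
        simp [f, g, inl] at h ⊢
        rw [h]
      · simp [inl]
    · apply Arrow.hom_ext
      · simp [inr]
      · have h1 := Arrow.w s.inr
        have h2 := congrArg Arrow.Hom.right s.condition
        simp [f, g, inr] at h1 h2 ⊢
        rw [← h2]
    · apply Arrow.hom_ext
      · have := congrArg Arrow.Hom.left hmr
        simp [inr] at this ⊢
        rw [← this]
      · have := congrArg Arrow.Hom.right hml
        simp [inl] at this ⊢
        rw [← this]
  have := hQ WalkingSpan (span f g) c hc (by
    rintro (_ | _ | _)
    · exact hu
    · exact huv
    · exact hiso (𝟙 B) inferInstance)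
  exact this

end Paper
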